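/- Let g be a real semisimple Lie algebra, α a simple root, v ⊆ g_α a 2-dimensional abelian subspace, ξ ∈ v a unit vector, and t ∈ ℝ. Set g = Exp(tξ). Then Ad(g⁻¹)(a ⊕ (n ⊖ v)), intersected with a ⊕ n and described explicitly, equals ker α ⊕ (n ⊖ v) ⊕ ℝ(H_α + t|α|²ξ); in particular its orthogonal complement inside a ⊕ n with respect to ⟨·,·⟩_{AN} is spanned by η and tH_α - 2ξ, where {ξ,η} is an orthogonal basis of v. -/

import Mathlib

/-- The inner product `⟨X,Y⟩ = -B(X, θY)` associated with a Cartan involution `θ`. -/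
noncomputable def cip (L : Type*) [LieRing L] [LieAlgebra ℝ L]
    (θ : L →ₗ⁅ℝ⁆ L) (X Y : L) : ℝ :=
  -(killingForm ℝ L X (θ Y))

/-- The left-invariant metric of `AN`. -/
noncomputable def cipAN (L : Type*) [LieRing L] [LieAlgebra ℝ L]
    (θ : L →ₗ⁅ℝ⁆ L) (Pa Pn : L →ₗ[ℝ] L) (X Y : L) : ℝ :=
  cip L θ (Pa X) (Pa Y) + (1 / 2) * cip L θ (Pn X) (Pn Y)

/-- `E` is the exponential `e^f` of the endomorphism `f`. -/
def IsExpOf (L : Type*) [LieRing L] [LieAlgebra ℝ L] [TopologicalSpace L]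
    (f E : Module.End ℝ L) : Prop :=
  ∀ Y : L, Filter.Tendsto
    (fun N : ℕ => ∑ k ∈ Finset.range N, ((k.factorial : ℝ)⁻¹ • (f ^ k)) Y)
    Filter.atTop (nhds (E Y))

theorem IsExpOf.injective {L : Type*} [LieRing L] [LieAlgebra ℝ L]
    [FiniteDimensional ℝ L] [TopologicalSpace L] [IsTopologicalAddGroup L]
    [ContinuousSMul ℝ L] [T2Space L]
    {f E : Module.End ℝ L} (h : IsExpOf L f E) : Function.Injective E := by
  classical
  let F := Fin (Module.finrank ℝ L) → ℝ
  let e : L ≃L[ℝ] F := (Module.finBasis ℝ L).equivFun.toContinuousLinearEquiv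
  let fC : L →L[ℝ] L := LinearMap.toContinuousLinearMap f
  let A : F →L[ℝ] F := (e.arrowCongr e) fC
  have hA : ∀ z : L, A (e z) = e (f z) := by
    intro z
    simp [A, ContinuousLinearEquiv.arrowCongr, fC]
  have hAk : ∀ (k : ℕ) (z : L), (A ^ k) (e z) = e ((f ^ k) z) := by
    intro k
    induction k with
    | zero => intro z; simp
    | succ m ih =>
      intro z
      rw [pow_succ, pow_succ]
      have : (A ^ m * A) (e z) = (A ^ m) (A (e z)) := rfl
      rw [this, hA z, ih]
      rfl
  have key : ∀ Y : L, E Y = e.symm (NormedSpace.exp A (e Y)) := by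
    intro Y
    have hs : HasSum (fun k : ℕ => ((k.factorial : ℝ)⁻¹ • A ^ k)) (NormedSpace.exp A) := by
      rw [NormedSpace.exp_eq_tsum (𝕂 := ℝ)]
      exact (NormedSpace.expSeries_summable' (𝕂 := ℝ) A).hasSum
    have hs2 : HasSum (fun k : ℕ => ((k.factorial : ℝ)⁻¹ • A ^ k) (e Y))
        (NormedSpace.exp A (e Y)) := by
      have := hs.mapL (ContinuousLinearMap.apply ℝ F (e Y))
      simpa using this
    have ht := hs2.tendsto_sum_nat
    have ht2 := (e.symm.continuous.tendsto _).comp ht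
    have heq : ((fun z => e.symm z) ∘ fun N : ℕ =>
          ∑ k ∈ Finset.range N, ((k.factorial : ℝ)⁻¹ • A ^ k) (e Y))
        = fun N : ℕ => ∑ k ∈ Finset.range N, ((k.factorial : ℝ)⁻¹ • f ^ k) Y := by
      funext N
      simp only [Function.comp_apply, map_sum]
      refine Finset.sum_congr rfl fun k _ => ?_
      have h1 : ((k.factorial : ℝ)⁻¹ • A ^ k) (e Y) = (k.factorial : ℝ)⁻¹ • ((A ^ k) (e Y)) := rfl
      rw [h1, hAk k Y, map_smul]
      simp
    rw [heq] at ht2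
    exact tendsto_nhds_unique (h Y) ht2
  letI : NormedAlgebra ℚ (F →L[ℝ] F) := NormedAlgebra.restrictScalars ℚ ℝ (F →L[ℝ] F)
  have hmul : NormedSpace.exp (-A) * NormedSpace.exp A = 1 := by
    rw [← NormedSpace.exp_add_of_commute (Commute.refl A).neg_left]
    simp [NormedSpace.exp_zero]
  have hinj : Function.Injective ⇑(NormedSpace.exp A) := by
    intro x y hxy
    have hx : (NormedSpace.exp (-A) * NormedSpace.exp A) x
        = (NormedSpace.exp (-A) * NormedSpace.exp A) y := by
      show NormedSpace.exp (-A) (NormedSpace.exp A x)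
          = NormedSpace.exp (-A) (NormedSpace.exp A y)
      rw [hxy]
    rw [hmul] at hx
    exact hx
  intro x y hxy
  rw [key x, key y] at hxy
  exact e.injective (hinj (e.symm.injective hxy))

/-- Let `v ⊆ g_α` be an abelian plane with orthogonal basis `{ξ,η}`, `ξ` a unit vector,
`t ∈ ℝ` and `g = Exp(tξ)`.  Then `Ad(g⁻¹)(a ⊕ (n ⊖ v))` equals
`ker α ⊕ (n ⊖ v) ⊕ ℝ(H_α + t|α|²ξ)`; in particular its orthogonal complement in `a ⊕ n`
with respect to `⟨·,·⟩_{AN}` is spanned by `η` and `tH_α - 2ξ`. -/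
theorem conjugated_s_v
    (L : Type*) [LieRing L] [LieAlgebra ℝ L] [FiniteDimensional ℝ L]
    [LieAlgebra.IsSemisimple ℝ L]
    [TopologicalSpace L] [IsTopologicalAddGroup L] [ContinuousSMul ℝ L] [T2Space L]
    (θ : L →ₗ⁅ℝ⁆ L) (hθ : Function.Involutive θ)
    (hpos : ∀ X : L, X ≠ 0 → 0 < cip L θ X X)
    (a n : Submodule ℝ L)
    (hap : ∀ H ∈ a, θ H = -H)
    (habelian : ∀ H ∈ a, ∀ H' ∈ a, ⁅H, H'⁆ = 0)
    (hnn : ∀ X ∈ n, ∀ Y ∈ n, ⁅X, Y⁆ ∈ n)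
    (han : ∀ H ∈ a, ∀ X ∈ n, ⁅H, X⁆ ∈ n)
    (horthan : ∀ H ∈ a, ∀ X ∈ n, cip L θ H X = 0)
    (hBnn : ∀ X ∈ n, ∀ Y ∈ n, killingForm ℝ L X Y = 0)
    (hsymm : ∀ X Y : L, cip L θ X Y = cip L θ Y X)
    (hadj : ∀ X Y Z : L, cip L θ ⁅X, Y⁆ Z = -(cip L θ Y ⁅θ X, Z⁆))
    -- the simple root `α` and its dual `H_α`
    (αl : L →ₗ[ℝ] ℝ) (Hα : L) (hHα : Hα ∈ a)
    (hdual : ∀ H ∈ a, cip L θ Hα H = αl H)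
    -- the abelian plane `v ⊆ g_α` with orthogonal basis `{ξ, η}`, `ξ` a unit vector
    (v : Submodule ℝ L) (hvn : v ≤ n)
    (hvroot : ∀ V ∈ v, ∀ H ∈ a, ⁅H, V⁆ = αl H • V)
    (hvab : ∀ V ∈ v, ∀ W ∈ v, ⁅V, W⁆ = 0)
    -- since `α` is simple, `[n,n]` is orthogonal to `g_α ⊇ v`
    (hsimple : ∀ X ∈ n, ∀ Y ∈ n, ∀ V ∈ v, cip L θ ⁅X, Y⁆ V = 0)
    (ξ η : L) (hξv : ξ ∈ v) (hηv : η ∈ v) (hη0 : η ≠ 0)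
    (hnorm : cip L θ ξ ξ = 1) (horth : cip L θ ξ η = 0)
    (hspanv : v = Submodule.span ℝ {ξ, η})
    -- projections defining the `AN`-metric
    (Pa Pn : L →ₗ[ℝ] L)
    (hPaa : ∀ x ∈ a, Pa x = x ∧ Pn x = 0)
    (hPnn : ∀ x ∈ n, Pn x = x ∧ Pa x = 0)
    (hPmem : ∀ x : L, Pa x ∈ a ∧ Pn x ∈ n)
    (t : ℝ)
    -- `Ad(g⁻¹) = e^{-t ad ξ}`
    (Einv : Module.End ℝ L)
    (hEinv : IsExpOf L ((-t) • LieAlgebra.ad ℝ L ξ) Einv) :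
    Submodule.map Einv
        (a ⊔ (n ⊓ ⨅ V : v, LinearMap.ker ((killingForm ℝ L).flip (θ (V : L))))) =
      (a ⊓ LinearMap.ker αl) ⊔
        (n ⊓ ⨅ V : v, LinearMap.ker ((killingForm ℝ L).flip (θ (V : L)))) ⊔
        Submodule.span ℝ {Hα + (t * cip L θ Hα Hα) • ξ} ∧
    (∀ x ∈ a ⊔ n,
      (x ∈ Submodule.map Einv
          (a ⊔ (n ⊓ ⨅ V : v, LinearMap.ker ((killingForm ℝ L).flip (θ (V : L))))) ↔
        (cipAN L θ Pa Pn x η = 0 ∧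
          cipAN L θ Pa Pn x (t • Hα - (2 : ℝ) • ξ) = 0))) := by

  classical
  set W : Submodule ℝ L := ⨅ V : v, LinearMap.ker ((killingForm ℝ L).flip (θ (V : L))) with hWdef
  set f : Module.End ℝ L := (-t) • LieAlgebra.ad ℝ L ξ with hfdef
  have hE : IsExpOf L f Einv := hEinv
  -- basic bilinearity lemmas for `cip`
  have cip_addl : ∀ X Y Z : L, cip L θ (X + Y) Z = cip L θ X Z + cip L θ Y Z := by
    intro X Y Z; simp only [cip, map_add, LinearMap.add_apply]; ring
  have cip_subl : ∀ X Y Z : L, cip L θ (X - Y) Z = cip L θ X Z - cip L θ Y Z := by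
    intro X Y Z; simp only [cip, map_sub, LinearMap.sub_apply]; ring
  have cip_smull : ∀ (c : ℝ) (X Y : L), cip L θ (c • X) Y = c * cip L θ X Y := by
    intro c X Y; simp only [cip, map_smul, LinearMap.smul_apply, smul_eq_mul]; ring
  have θadd : ∀ Y Z : L, θ (Y + Z) = θ Y + θ Z := fun Y Z => by
    rw [← LieHom.coe_toLinearMap, map_add]
  have θsmul : ∀ (c : ℝ) (Y : L), θ (c • Y) = c • θ Y := fun c Y => by
    rw [← LieHom.coe_toLinearMap, map_smul]
  have θneg : ∀ Y : L, θ (-Y) = -(θ Y) := fun Y => by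
    rw [← LieHom.coe_toLinearMap, map_neg]
  have cip_addr : ∀ X Y Z : L, cip L θ X (Y + Z) = cip L θ X Y + cip L θ X Z := by
    intro X Y Z; simp only [cip, θadd, map_add]; ring
  have cip_smulr : ∀ (c : ℝ) (X Y : L), cip L θ X (c • Y) = c * cip L θ X Y := by
    intro c X Y; simp only [cip, θsmul, map_smul, smul_eq_mul]; ring
  have cip_zeror : ∀ X : L, cip L θ X 0 = 0 := by
    intro X
    have h0 : θ (0 : L) = 0 := by rw [← LieHom.coe_toLinearMap, map_zero]
    simp [cip, h0]
  have cip_negr : ∀ X Y : L, cip L θ X (-Y) = -(cip L θ X Y) := by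
    intro X Y; simp only [cip, θneg, map_neg]
  have hcip0 : ∀ X : L, cip L θ X X = 0 → X = 0 := by
    intro X hX
    by_contra hne
    exact (hpos X hne).ne' hX
  have hanz : ∀ z : L, z ∈ a → z ∈ n → z = 0 := fun z h1 h2 => hcip0 z (horthan z h1 z h2)
  have hmemW : ∀ x : L, x ∈ W ↔ ∀ V ∈ v, cip L θ x V = 0 := by
    intro x
    simp only [hWdef, Submodule.mem_iInf, LinearMap.mem_ker, LinearMap.flip_apply, cip,
      neg_eq_zero]
    exact ⟨fun h V hV => h ⟨V, hV⟩, fun h V => h V V.2⟩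
  have hξn : ξ ∈ n := hvn hξv
  have happ : ∀ z : L, f z = (-t) • ⁅ξ, z⁆ := by
    intro z
    rw [hfdef]
    simp [LieAlgebra.ad_apply]
  have hfH : ∀ H ∈ a, f H = (t * αl H) • ξ := by
    intro H hH
    rw [happ, ← lie_skew, hvroot ξ hξv H hH, smul_neg, smul_smul, ← neg_smul]
    congr 1
    ring
  have hf2 : ∀ H ∈ a, ∀ k : ℕ, 2 ≤ k → (f ^ k) H = 0 := by
    intro H hH k hk
    have h2 : (f ^ 2) H = 0 := by
      have h21 : (f ^ 2) H = f (f H) := by rw [pow_two]; rfl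
      rw [h21, hfH H hH, map_smul, happ ξ]
      simp [lie_self]
    obtain ⟨m, rfl⟩ := Nat.exists_eq_add_of_le hk
    rw [add_comm, pow_add]
    have h22 : (f ^ m * f ^ 2) H = (f ^ m) ((f ^ 2) H) := rfl
    rw [h22, h2, map_zero]
  have hEa : ∀ H ∈ a, Einv H = H + (t * αl H) • ξ := by
    intro H hH
    have hsum : ∀ N : ℕ, 2 ≤ N →
        (∑ k ∈ Finset.range N, ((k.factorial : ℝ)⁻¹ • f ^ k) H) = H + (t * αl H) • ξ := by
      intro N hN
      rw [← Finset.sum_subset (Finset.range_subset_range.mpr hN)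
        (fun k _ hk2 => by
          simp only [Finset.mem_range, not_lt] at hk2
          have : ((k.factorial : ℝ)⁻¹ • f ^ k) H = (k.factorial : ℝ)⁻¹ • ((f ^ k) H) := rfl
          rw [this, hf2 H hH k hk2, smul_zero])]
      rw [Finset.sum_range_succ, Finset.sum_range_one]
      have h0 : (((0 : ℕ).factorial : ℝ)⁻¹ • f ^ 0) H = H := by simp
      have h1 : (((1 : ℕ).factorial : ℝ)⁻¹ • f ^ 1) H = (t * αl H) • ξ := by
        have : (((1 : ℕ).factorial : ℝ)⁻¹ • f ^ 1) H = ((1:ℕ).factorial : ℝ)⁻¹ • (f H) := by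
          rw [pow_one]; rfl
        rw [this, hfH H hH]
        simp
      rw [h0, h1]
    have hconst : Filter.Tendsto
        (fun N : ℕ => ∑ k ∈ Finset.range N, ((k.factorial : ℝ)⁻¹ • f ^ k) H)
        Filter.atTop (nhds (H + (t * αl H) • ξ)) := by
      refine Filter.Tendsto.congr' ?_ tendsto_const_nhds
      filter_upwards [Filter.eventually_ge_atTop 2] with N hN
      exact (hsum N hN).symm
    exact tendsto_nhds_unique (hE H) hconst
  have hfn : ∀ X ∈ n, f X ∈ n := by
    intro X hX
    rw [happ]
    exact Submodule.smul_mem n _ (hnn ξ hξn X hX)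
  have hfkn : ∀ k : ℕ, ∀ X ∈ n, (f ^ k) X ∈ n := by
    intro k
    induction k with
    | zero => intro X hX; simpa using hX
    | succ m ih =>
      intro X hX
      rw [pow_succ]
      exact ih (f X) (hfn X hX)
  have hEn : ∀ X ∈ n, Einv X ∈ n := by
    intro X hX
    have hcl : IsClosed (n : Set L) := Submodule.closed_of_finiteDimensional n
    refine hcl.mem_of_tendsto (hE X) ?_
    filter_upwards with N
    exact Submodule.sum_mem n fun k _ => Submodule.smul_mem n _ (hfkn k X hX)
  have hEW : ∀ X ∈ n, (∀ V ∈ v, cip L θ X V = 0) → ∀ V ∈ v, cip L θ (Einv X) V = 0 := by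
    intro X hX hXW V hV
    set φ : L →ₗ[ℝ] ℝ := -((killingForm ℝ L).flip (θ V)) with hφdef
    have hφ : ∀ z : L, φ z = cip L θ z V := by
      intro z
      simp [hφdef, cip, LinearMap.flip_apply]
    have hcont : Continuous φ := φ.continuous_of_finiteDimensional
    have h1 : Filter.Tendsto
        (fun N : ℕ => φ (∑ k ∈ Finset.range N, ((k.factorial : ℝ)⁻¹ • f ^ k) X))
        Filter.atTop (nhds (φ (Einv X))) := (hcont.tendsto _).comp (hE X)
    have h2 : ∀ N : ℕ, φ (∑ k ∈ Finset.range N, ((k.factorial : ℝ)⁻¹ • f ^ k) X) = 0 := by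
      intro N
      rw [map_sum]
      refine Finset.sum_eq_zero fun k _ => ?_
      have hterm : ((k.factorial : ℝ)⁻¹ • f ^ k) X = (k.factorial : ℝ)⁻¹ • ((f ^ k) X) := rfl
      rw [hterm, map_smul, smul_eq_mul]
      cases k with
      | zero =>
        have : (f ^ 0) X = X := by simp
        rw [this, hφ, hXW V hV, mul_zero]
      | succ m =>
        have hfm : (f ^ (m + 1)) X = f ((f ^ m) X) := by rw [pow_succ']; rfl
        rw [hfm, happ, map_smul, smul_eq_mul, hφ,
          hsimple ξ hξn ((f ^ m) X) (hfkn m X hX) V hV]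
        ring
    have h1' : Filter.Tendsto (fun _ : ℕ => (0 : ℝ)) Filter.atTop (nhds (φ (Einv X))) :=
      h1.congr fun N => h2 N
    have : φ (Einv X) = 0 := tendsto_nhds_unique h1' tendsto_const_nhds
    rw [← hφ]
    exact this
  have hinj : Function.Injective Einv := IsExpOf.injective hE
  have hsurj : Function.Surjective Einv := LinearMap.injective_iff_surjective.mp hinj
  have hmapp : Submodule.map Einv (n ⊓ W) = n ⊓ W := by
    have hle : Submodule.map Einv (n ⊓ W) ≤ n ⊓ W := by
      rintro x ⟨y, hy, rfl⟩
      exact ⟨hEn y hy.1, (hmemW _).mpr (hEW y hy.1 ((hmemW y).mp hy.2))⟩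
    refine Submodule.eq_of_le_of_finrank_le hle (le_of_eq ?_)
    have h1 : Submodule.map ((LinearEquiv.ofBijective Einv ⟨hinj, hsurj⟩ : L ≃ₗ[ℝ] L) :
        L →ₗ[ℝ] L) (n ⊓ W) = Submodule.map Einv (n ⊓ W) := rfl
    rw [← h1, LinearEquiv.finrank_map_eq]
  have hαH0 : ∀ H ∈ a, cip L θ Hα Hα = 0 → αl H = 0 := by
    intro H hH hc
    have h0 := hcip0 Hα hc
    rw [← hdual H hH, h0]
    simp [cip]
  have hg : Einv Hα = Hα + (t * cip L θ Hα Hα) • ξ := by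
    rw [hEa Hα hHα, hdual Hα hHα]
  have hmapa : Submodule.map Einv a
      = (a ⊓ LinearMap.ker αl) ⊔ Submodule.span ℝ {Hα + (t * cip L θ Hα Hα) • ξ} := by
    apply le_antisymm
    · rintro x ⟨H, hH, rfl⟩
      by_cases hc : cip L θ Hα Hα = 0
      · have hα := hαH0 H hH hc
        rw [hEa H hH, hα]
        simp only [mul_zero, zero_smul, add_zero]
        exact Submodule.mem_sup_left ⟨hH, LinearMap.mem_ker.mpr hα⟩
      · set s := αl H / cip L θ Hα Hα with hsdef
        have hst : s * (t * cip L θ Hα Hα) = t * αl H := by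
          rw [hsdef]
          field_simp
        have hdec : Einv H = (H - s • Hα) + s • (Hα + (t * cip L θ Hα Hα) • ξ) := by
          rw [hEa H hH, smul_add, smul_smul, hst]
          abel
        rw [hdec]
        refine Submodule.add_mem _
          (Submodule.mem_sup_left ⟨sub_mem hH (Submodule.smul_mem a s hHα),
            LinearMap.mem_ker.mpr ?_⟩)
          (Submodule.mem_sup_right (Submodule.mem_span_singleton.mpr ⟨s, rfl⟩))
        have hαα : αl Hα = cip L θ Hα Hα := (hdual Hα hHα).symm
        rw [map_sub, map_smul, hαα, smul_eq_mul, hsdef]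
        field_simp
        ring
    · apply sup_le
      · rintro x ⟨hxa, hxk⟩
        exact ⟨x, hxa, by rw [hEa x hxa, LinearMap.mem_ker.mp hxk]; simp⟩
      · rw [Submodule.span_le, Set.singleton_subset_iff]
        exact ⟨Hα, hHα, hg⟩
  have hpart1 : Submodule.map Einv (a ⊔ (n ⊓ W))
      = (a ⊓ LinearMap.ker αl) ⊔ (n ⊓ W) ⊔
        Submodule.span ℝ {Hα + (t * cip L θ Hα Hα) • ξ} := by
    rw [Submodule.map_sup, hmapa, hmapp, sup_right_comm]
  refine ⟨hpart1, ?_⟩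
  intro x hx
  rw [hpart1]
  obtain ⟨H, hH, X, hX, rfl⟩ := Submodule.mem_sup.mp hx
  have hPaHX : Pa (H + X) = H := by rw [map_add, (hPaa H hH).1, (hPnn X hX).2, add_zero]
  have hPnHX : Pn (H + X) = X := by rw [map_add, (hPaa H hH).2, (hPnn X hX).1, zero_add]
  have hPaη : Pa η = 0 := (hPnn η (hvn hηv)).2
  have hPnη : Pn η = η := (hPnn η (hvn hηv)).1
  have hPaT : Pa (t • Hα - (2 : ℝ) • ξ) = t • Hα := by
    rw [map_sub, map_smul, map_smul, (hPaa Hα hHα).1, (hPnn ξ hξn).2, smul_zero, sub_zero]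
  have hPnT : Pn (t • Hα - (2 : ℝ) • ξ) = -((2 : ℝ) • ξ) := by
    rw [map_sub, map_smul, map_smul, (hPaa Hα hHα).2, (hPnn ξ hξn).1, smul_zero, zero_sub]
  have hval1 : cipAN L θ Pa Pn (H + X) η = (1 / 2) * cip L θ X η := by
    simp only [cipAN]
    rw [hPaHX, hPnHX, hPaη, hPnη, cip_zeror]
    ring
  have hval2 : cipAN L θ Pa Pn (H + X) (t • Hα - (2 : ℝ) • ξ) = t * αl H - cip L θ X ξ := by
    simp only [cipAN]
    rw [hPaHX, hPnHX, hPaT, hPnT, cip_smulr, cip_negr, cip_smulr, hsymm H Hα, hdual H hH]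
    ring
  have huniq : ∀ H₁ ∈ a, ∀ X₁ ∈ n, H₁ + X₁ = H + X → H₁ = H ∧ X₁ = X := by
    intro H₁ h1 X₁ h2 heq
    have h5 : H₁ - H = X - X₁ := by
      calc H₁ - H = (H₁ + X₁) - X₁ - H := by abel
      _ = (H + X) - X₁ - H := by rw [heq]
      _ = X - X₁ := by abel
    have h6 : H₁ - H = 0 := by
      apply hanz (H₁ - H) (sub_mem h1 hH)
      rw [h5]
      exact sub_mem hX h2
    have h7 : H₁ = H := by
      have := sub_eq_zero.mp h6
      exact this
    refine ⟨h7, ?_⟩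
    have h8 : X - X₁ = 0 := by rw [← h5]; exact h6
    have := sub_eq_zero.mp h8
    exact this.symm
  have hWlem : ∀ z : L, cip L θ z ξ = 0 → cip L θ z η = 0 → z ∈ W := by
    intro z h1 h2
    rw [hmemW]
    intro V hV
    rw [hspanv] at hV
    refine Submodule.span_induction (p := fun y _ => cip L θ z y = 0) ?_ ?_ ?_ ?_ hV
    · rintro y (rfl | rfl)
      · exact h1
      · exact h2
    · exact cip_zeror z
    · intro y w _ _ hy hw
      rw [cip_addr, hy, hw, add_zero]
    · intro c y _ hy
      rw [cip_smulr, hy, mul_zero]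
  constructor
  · intro hmem
    obtain ⟨y, hy, z, hz, hsum⟩ := Submodule.mem_sup.mp hmem
    obtain ⟨H₀, hH₀, X₀, hX₀, rfl⟩ := Submodule.mem_sup.mp hy
    obtain ⟨s, rfl⟩ := Submodule.mem_span_singleton.mp hz
    have hH1 : H₀ + s • Hα ∈ a := Submodule.add_mem a hH₀.1 (Submodule.smul_mem a s hHα)
    have hX1 : X₀ + (s * (t * cip L θ Hα Hα)) • ξ ∈ n :=
      Submodule.add_mem n hX₀.1 (Submodule.smul_mem n _ hξn)
    have hre : (H₀ + s • Hα) + (X₀ + (s * (t * cip L θ Hα Hα)) • ξ) = H + X := by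
      rw [← hsum, smul_add, smul_smul]
      abel
    obtain ⟨hHeq, hXeq⟩ := huniq _ hH1 _ hX1 hre
    have hXη : cip L θ X η = 0 := by
      rw [← hXeq, cip_addl, cip_smull, horth, (hmemW X₀).mp hX₀.2 η hηv]
      ring
    have hXξ : cip L θ X ξ = s * (t * cip L θ Hα Hα) := by
      rw [← hXeq, cip_addl, cip_smull, hnorm, (hmemW X₀).mp hX₀.2 ξ hξv]
      ring
    have hαH : αl H = s * cip L θ Hα Hα := by
      rw [← hHeq, map_add, map_smul, LinearMap.mem_ker.mp hH₀.2, ← hdual Hα hHα,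
        smul_eq_mul, zero_add]
    constructor
    · rw [hval1, hXη]
      ring
    · rw [hval2, hXξ, hαH]
      ring
  · rintro ⟨hc1, hc2⟩
    rw [hval1] at hc1
    rw [hval2] at hc2
    have hXη : cip L θ X η = 0 := by linarith
    have hXξ : cip L θ X ξ = t * αl H := by linarith
    by_cases hc : cip L θ Hα Hα = 0
    · have hα := hαH0 H hH hc
      have hXξ0 : cip L θ X ξ = 0 := by rw [hXξ, hα, mul_zero]
      exact Submodule.add_mem _
        (Submodule.mem_sup_left (Submodule.mem_sup_left ⟨hH, LinearMap.mem_ker.mpr hα⟩))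
        (Submodule.mem_sup_left (Submodule.mem_sup_right ⟨hX, hWlem X hXξ0 hXη⟩))
    · set s := αl H / cip L θ Hα Hα with hsdef
      have hst : s * (t * cip L θ Hα Hα) = t * αl H := by
        rw [hsdef]
        field_simp
      have hdecomp : H + X = ((H - s • Hα) + (X - (s * (t * cip L θ Hα Hα)) • ξ)) +
          s • (Hα + (t * cip L θ Hα Hα) • ξ) := by
        rw [smul_add, smul_smul]
        abel
      rw [hdecomp]
      refine Submodule.add_mem _
        (Submodule.mem_sup_left (Submodule.add_mem _
          (Submodule.mem_sup_left ⟨sub_mem hH (Submodule.smul_mem a s hHα),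
            LinearMap.mem_ker.mpr ?_⟩)
          (Submodule.mem_sup_right ⟨sub_mem hX (Submodule.smul_mem n _ hξn),
            hWlem _ ?_ ?_⟩)))
        (Submodule.mem_sup_right (Submodule.mem_span_singleton.mpr ⟨s, rfl⟩))
      · rw [map_sub, map_smul, ← hdual Hα hHα, smul_eq_mul, hsdef]
        field_simp
        ring
      · rw [cip_subl, cip_smull, hnorm, hXξ]
        linarith [hst]
      · rw [cip_subl, cip_smull, horth, hXη]
        ring
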